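/- Let n ≥ 1, let X be an n-category, let a ∈ X_0 be a vertex, let f : D^l → X be a simplicial map, and let h : [r] → [l] be any function, inducing a simplicial map D^r → D^l. Then the induced map ĥ : Hom^L_X(a, f∘h) → Hom^L_X(a, f), given by (g,e) ↦ (g, h∘e), is a weak equivalence of (n−1)-groupoids (in particular of Kan complexes). -/

import Mathlib

open CategoryTheory Simplicial Opposite

universe u

namespace Paper

/-- A simplicial set has the Kan extension property for all horns. -/
def IsKan (X : SSet.{u}) : Prop :=
  ∀ (m : ℕ), 0 < m → ∀ (i : Fin (m + 1)) (σ : (Λ[m, i] : SSet.{u}) ⟶ X),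
    ∃ τ : Δ[m] ⟶ X, σ = Λ[m, i].ι ≫ τ

/-- `X` is an `n`-groupoid: every horn has a filler, unique in dimensions `≥ n+1`. -/
def IsNGroupoid (n : ℕ) (X : SSet.{u}) : Prop :=
  IsKan X ∧
    ∀ (m : ℕ), n + 1 ≤ m → ∀ (i : Fin (m + 1)) (τ τ' : Δ[m] ⟶ X),
      Λ[m, i].ι ≫ τ = Λ[m, i].ι ≫ τ' → τ = τ'

/-- `X` is an `n`-category: every inner horn has a filler, unique in dimensions `≥ n+1`. -/
def IsNCategory (n : ℕ) (X : SSet.{u}) : Prop :=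
  (∀ (m : ℕ) (i : Fin (m + 1)), 0 < (i : ℕ) → (i : ℕ) < m →
      ∀ (σ : (Λ[m, i] : SSet.{u}) ⟶ X), ∃ τ : Δ[m] ⟶ X, σ = Λ[m, i].ι ≫ τ) ∧
    ∀ (m : ℕ), n + 1 ≤ m → ∀ (i : Fin (m + 1)), 0 < (i : ℕ) → (i : ℕ) < m →
      ∀ (τ τ' : Δ[m] ⟶ X),
        Λ[m, i].ι ≫ τ = Λ[m, i].ι ≫ τ' → τ = τ'

/-- Homotopy of `m`-simplices relative to the boundary: there is
`h ∈ X_{m+1}` with `d₀ h = α`, `d₁ h = β` and `dᵢ h = dᵢ (s₀ α)` for `2 ≤ i`. -/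
def Htpy (X : SSet.{u}) {m : ℕ} (α β : X _⦋m⦌) : Prop :=
  ∃ h : X _⦋m + 1⦌, X.δ 0 h = α ∧ X.δ 1 h = β ∧
    ∀ i : Fin (m + 2), 2 ≤ (i : ℕ) → X.δ i h = X.δ i (X.σ 0 α)

/-- The constant `m`-simplex at a vertex `a`. -/
def constSimplex (X : SSet.{u}) (a : X _⦋0⦌) (m : ℕ) : X _⦋m⦌ :=
  X.map (SimplexCategory.const ⦋m⦌ ⦋0⦌ 0).op a

/-- The cycle condition: `dᵢ x_j = d_{j-1} x_i` for `i < j`. -/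
def IsCycle (X : SSet.{u}) : ∀ {m : ℕ}, (Fin (m + 2) → X.obj (op ⦋m⦌)) → Prop := fun {m} x => match m, x with
  | 0, _ => True
  | m + 1, x =>
      ∀ (i j : ℕ) (hj : j < m + 3) (hij : i < j),
        X.δ ⟨i, by omega⟩ (x ⟨j, hj⟩) = X.δ ⟨j - 1, by omega⟩ (x ⟨i, by omega⟩)

/-- The type of `m`-cycles of `X`; by convention there is a unique `0`-cycle. -/
def CycleType (X : SSet.{u}) : ℕ → Type u := fun m => match m with
  | 0 => PUnit
  | m + 1 => { x : Fin (m + 2) → X.obj (op ⦋m⦌) // IsCycle X x }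

/-- `S(X, b)`: the set of `m`-simplices with boundary the cycle `b`
(all vertices, for `m = 0`). -/
def SSimp (X : SSet.{u}) : ∀ (m : ℕ), CycleType X m → Set (X _⦋m⦌) := fun m b => match m, b with
  | 0, _ => Set.univ
  | m + 1, b => { α | ∀ i : Fin (m + 2), X.δ i α = b.1 i }

lemma map_delta {X Y : SSet.{u}} (f : X ⟶ Y) {n : ℕ} (i : Fin (n + 2)) (x : X _⦋n + 1⦌) :
    f.app (op ⦋n⦌) (X.δ i x) = Y.δ i (f.app (op ⦋n + 1⦌) x) :=
  NatTrans.naturality_apply f (SimplexCategory.δ i).op x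

lemma map_sigma {X Y : SSet.{u}} (f : X ⟶ Y) {n : ℕ} (i : Fin (n + 1)) (x : X _⦋n⦌) :
    f.app (op ⦋n + 1⦌) (X.σ i x) = Y.σ i (f.app (op ⦋n⦌) x) :=
  NatTrans.naturality_apply f (SimplexCategory.σ i).op x

lemma map_const {X Y : SSet.{u}} (f : X ⟶ Y) (a : X _⦋0⦌) (m : ℕ) :
    f.app (op ⦋m⦌) (constSimplex X a m) = constSimplex Y (f.app (op ⦋0⦌) a) m :=
  NatTrans.naturality_apply f (SimplexCategory.const ⦋m⦌ ⦋0⦌ 0).op a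

/-- The image of a cycle under a simplicial map. -/
def cycleMap {X Y : SSet.{u}} (f : X ⟶ Y) : ∀ {m : ℕ}, CycleType X m → CycleType Y m := fun {m} b => match m, b with
  | 0, _ => PUnit.unit.{u + 1}
  | m + 1, b => ⟨fun i => f.app (op ⦋m⦌) (b.1 i), by
      cases m with
      | zero => trivial
      | succ m =>
        intro i j hj hij
        rw [← map_delta, ← map_delta, b.2 i j hj hij]⟩

lemma htpy_map {X Y : SSet.{u}} (f : X ⟶ Y) {m : ℕ} {α β : X _⦋m⦌} (h : Htpy X α β) :
    Htpy Y (f.app (op ⦋m⦌) α) (f.app (op ⦋m⦌) β) := by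
  obtain ⟨H, h0, h1, hrest⟩ := h
  refine ⟨f.app (op ⦋m + 1⦌) H, ?_, ?_, ?_⟩
  · rw [← map_delta, h0]
  · rw [← map_delta, h1]
  · intro i hi
    rw [← map_delta, hrest i hi, map_delta, map_sigma]

/-- `S_k(X, a)`: simplices all of whose faces are the constant simplex at `a`. -/
def SKset (X : SSet.{u}) (a : X _⦋0⦌) : (k : ℕ) → Set (X _⦋k⦌) := fun k => match k with
  | 0 => Set.univ
  | k + 1 => { α | ∀ i : Fin (k + 2), X.δ i α = constSimplex X a k }

/-- The `k`-th homotopy set `π_k(X, a)`. -/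
def piSet (X : SSet.{u}) (a : X _⦋0⦌) (k : ℕ) : Type u :=
  Quot (fun (α β : SKset X a k) => Htpy X α.1 β.1)

lemma skMap_mem {X Y : SSet.{u}} (f : X ⟶ Y) (a : X _⦋0⦌) (k : ℕ) (α : SKset X a k) :
    f.app (op ⦋k⦌) α.1 ∈ SKset Y (f.app (op ⦋0⦌) a) k := by
  cases k with
  | zero => trivial
  | succ k =>
    intro i
    rw [← map_delta f i α.1, α.2 i, map_const]

/-- The map induced on homotopy sets by a simplicial map. -/
def piMap {X Y : SSet.{u}} (f : X ⟶ Y) (a : X _⦋0⦌) (k : ℕ) :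
    piSet X a k → piSet Y (f.app (op ⦋0⦌) a) k :=
  Quot.lift (fun α => Quot.mk _ ⟨f.app (op ⦋k⦌) α.1, skMap_mem f a k α⟩)
    (fun _ _ h => Quot.sound (htpy_map f h))

/-- A weak equivalence of simplicial sets (Kan complexes): all induced maps on
homotopy sets are bijections. -/
def IsWeakEquiv {X Y : SSet.{u}} (f : X ⟶ Y) : Prop :=
  ∀ (a : X _⦋0⦌) (k : ℕ), Function.Bijective (piMap f a k)

/-- `D^l`: the simplicial set whose `k`-simplices are all functions `[k] → [l]`
(not necessarily monotone). -/
def Disc (l : ℕ) : SSet.{u} where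
  obj k := Fin (k.unop.len + 1) → ULift.{u} (Fin (l + 1))
  map t := TypeCat.ofHom fun e => e ∘ t.unop.toOrderHom
  map_id := by intros; rfl
  map_comp := by intros; rfl

/-- The simplicial map `D^r ⟶ D^l` induced by a function `[r] → [l]`. -/
def discMap {r l : ℕ} (h : Fin (r + 1) → Fin (l + 1)) : Disc.{u} r ⟶ Disc.{u} l where
  app k := TypeCat.ofHom fun e => fun j => ULift.up (h (e j).down)
  naturality := by intros; rfl

lemma comp_const_zero {x y : SimplexCategory} (t : x ⟶ y) :
    t ≫ SimplexCategory.const y ⦋0⦌ 0 = SimplexCategory.const x ⦋0⦌ 0 := by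
  ext i : 3
  exact (Fin.eq_zero ((t ≫ SimplexCategory.const y ⦋0⦌ 0).toOrderHom i)).trans
    (Fin.eq_zero ((SimplexCategory.const x ⦋0⦌ 0).toOrderHom i)).symm

/-- The map `D^0 ⟶ X` determined by the vertex `a`. -/
def discPt (X : SSet.{u}) (a : X _⦋0⦌) : Disc.{u} 0 ⟶ X where
  app k := TypeCat.ofHom fun _ => X.map (SimplexCategory.const k.unop ⦋0⦌ 0).op a
  naturality := by
    intro k k' t
    ext e
    show X.map (SimplexCategory.const k'.unop ⦋0⦌ 0).op a
      = X.map t (X.map (SimplexCategory.const k.unop ⦋0⦌ 0).op a)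
    rw [← FunctorToTypes.map_comp_apply, ← t.op_unop, ← op_comp, comp_const_zero]

/-- The order-preserving map `t⁺` with `t⁺(0) = 0` and `t⁺(i+1) = t(i)+1`. -/
def plusOrderHom {p q : ℕ} (t : Fin (p + 1) →o Fin (q + 1)) :
    Fin (p + 2) →o Fin (q + 2) where
  toFun := Fin.cases 0 (fun j => (t j).succ)
  monotone' := by
    intro i j hij
    induction i using Fin.cases with
    | zero => simp
    | succ i =>
      induction j using Fin.cases with
      | zero => exact absurd hij (not_le.mpr (Fin.succ_pos i))
      | succ j =>
        simp only [Fin.cases_succ]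
        exact Fin.succ_le_succ_iff.mpr (t.monotone (Fin.succ_le_succ_iff.mp hij))

/-- The morphism `t⁺ : [x.len + 1] ⟶ [y.len + 1]` induced by `t : x ⟶ y`. -/
def tplus {x y : SimplexCategory} (t : x ⟶ y) :
    (⦋x.len + 1⦌ : SimplexCategory) ⟶ ⦋y.len + 1⦌ :=
  SimplexCategory.mkHom (plusOrderHom t.toOrderHom)

lemma tplus_id (x : SimplexCategory) :
    tplus (𝟙 x) = 𝟙 (⦋x.len + 1⦌ : SimplexCategory) := by
  ext i : 3
  induction i using Fin.cases with
  | zero => rfl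
  | succ i => rfl

lemma tplus_comp {x y z : SimplexCategory} (t : x ⟶ y) (s : y ⟶ z) :
    tplus (t ≫ s) = tplus t ≫ tplus s := by
  ext i : 3
  induction i using Fin.cases with
  | zero => rfl
  | succ i => rfl

lemma delta_op_tplus {x y : SimplexCategory} (t : x ⟶ y) :
    (tplus t).op ≫ (SimplexCategory.δ (0 : Fin (x.len + 2))).op
      = (SimplexCategory.δ (0 : Fin (y.len + 2))).op ≫ t.op := by
  rw [← op_comp, ← op_comp]
  congr 1

/-- `Hom^L_X(a, f)`: the simplicial set of left morphisms from the vertex `a`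
to the map `f : D^l ⟶ X`. -/
def HomL (X : SSet.{u}) (a : X _⦋0⦌) {l : ℕ} (f : Disc.{u} l ⟶ X) : SSet.{u} where
  obj k := { p : X.obj (op ⦋k.unop.len + 1⦌) × ((Disc.{u} l).obj k) //
      X.map (SimplexCategory.const ⦋0⦌ ⦋k.unop.len + 1⦌ 0).op p.1 = a ∧
      X.map (SimplexCategory.δ (0 : Fin (k.unop.len + 2))).op p.1 = f.app k p.2 }
  map {k k'} t := TypeCat.ofHom fun p => ⟨(X.map (tplus t.unop).op p.1.1, (Disc.{u} l).map t p.1.2), by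
      rw [← FunctorToTypes.map_comp_apply, ← op_comp, SimplexCategory.const_comp]
      exact p.2.1, by
      rw [← FunctorToTypes.map_comp_apply, delta_op_tplus t.unop,
        Quiver.Hom.op_unop, FunctorToTypes.map_comp_apply, p.2.2]
      exact (NatTrans.naturality_apply f t p.1.2).symm⟩
  map_id := by
    intro k
    refine ConcreteCategory.hom_ext _ _ fun p => ?_
    apply Subtype.ext
    show (X.map (tplus (𝟙 k).unop).op p.1.1, (Disc.{u} l).map (𝟙 k) p.1.2)
      = (p.1.1, p.1.2)
    rw [Prod.mk.injEq]
    constructor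
    · show X.map (tplus (𝟙 k.unop)).op p.1.1 = p.1.1
      rw [tplus_id, op_id, FunctorToTypes.map_id_apply]
    · exact FunctorToTypes.map_id_apply (Disc.{u} l) p.1.2
  map_comp := by
    intro k k' k'' t s
    refine ConcreteCategory.hom_ext _ _ fun p => ?_
    apply Subtype.ext
    show (X.map (tplus (t ≫ s).unop).op p.1.1, (Disc.{u} l).map (t ≫ s) p.1.2) = _
    rw [Prod.mk.injEq]
    constructor
    · show X.map (tplus (s.unop ≫ t.unop)).op p.1.1 = _
      rw [tplus_comp, op_comp, FunctorToTypes.map_comp_apply]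
      rfl
    · exact FunctorToTypes.map_comp_apply (Disc.{u} l) t s p.1.2

/-- The projection `Hom^L_X(a, f) ⟶ D^l`. -/
def homLProj (X : SSet.{u}) (a : X _⦋0⦌) {l : ℕ} (f : Disc.{u} l ⟶ X) :
    HomL X a f ⟶ Disc.{u} l where
  app k := TypeCat.ofHom fun p => p.1.2
  naturality := by intros; rfl

/-- The map `Hom^L_X(a, f ∘ h) ⟶ Hom^L_X(a, f)` induced by `h : [r] → [l]`. -/
def homLWhisker (X : SSet.{u}) (a : X _⦋0⦌) {r l : ℕ} (h : Fin (r + 1) → Fin (l + 1))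
    (f : Disc.{u} l ⟶ X) : HomL X a (discMap h ≫ f) ⟶ HomL X a f where
  app k := TypeCat.ofHom fun p => ⟨(p.1.1, (discMap h).app k p.1.2), p.2.1, p.2.2⟩
  naturality := by intros; rfl

/-- The indiscrete groupoid on a type: exactly one morphism between any two objects. -/
def Indiscrete (α : Type u) : Type u := α

instance (α : Type u) : Groupoid.{u} (Indiscrete α) where
  Hom _ _ := PUnit.{u + 1}
  id _ := PUnit.unit
  comp _ _ := PUnit.unit
  inv _ := PUnit.unit

/-- The map of nerves induced by a functor. -/
def nerveMap {C D : Type u} [Category.{u} C] [Category.{u} D] (F : C ⥤ D) :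
    nerve C ⟶ nerve D :=
  nerveFunctor.map (X := Cat.of C) (Y := Cat.of D) F.toCatHom

open SimplexCategory in
lemma delta_eval {m : ℕ} (j : Fin (m + 2)) (t : Fin (m + 1)) :
    (SimplexCategory.δ j).toOrderHom t = j.succAbove t := rfl

lemma sset_delta_def (X : SSet.{u}) {m : ℕ} (j : Fin (m + 2)) (y : X _⦋m + 1⦌) :
    X.δ j y = X.map (SimplexCategory.δ j).op y := rfl

open SimplexCategory in

open SimplexCategory in
lemma factor_indep_lt {n : ℕ} (X : SSet.{u}) (i : Fin (n + 3)) (x : Fin (n + 3) → X _⦋n + 1⦌)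
    (compat : ∀ (j k : Fin (n + 3)) (h : (j : ℕ) < (k : ℕ)) (hj : j ≠ i) (hk : k ≠ i),
      X.δ ⟨j, by omega⟩ (x k) = X.δ ⟨(k : ℕ) - 1, by omega⟩ (x j))
    {k : ℕ} (φ : (⦋k⦌ : SimplexCategory) ⟶ ⦋n + 2⦌) (j j' : Fin (n + 3))
    (hj : j ≠ i) (hj' : j' ≠ i) (hlt : j < j')
    (hm : ∀ t, φ.toOrderHom t ≠ j) (hm' : ∀ t, φ.toOrderHom t ≠ j') :
    X.map (factor_δ φ j).op (x j) = X.map (factor_δ φ j').op (x j') := by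
  have hjv : (j : ℕ) < (j' : ℕ) := hlt
  have hj'v : (j' : ℕ) < n + 3 := j'.isLt
  set jl : Fin (n + 2) := ⟨j, by omega⟩ with hjl
  set jp : Fin (n + 2) := ⟨(j' : ℕ) - 1, by omega⟩ with hjp
  have hcastjl : jl.castSucc = j := by ext; rfl
  have hsuccjp : jp.succ = j' := by ext; simp [jp]; omega
  set ψ := factor_δ φ j' with hψdef
  have hψ : ψ ≫ δ j' = φ := factor_δ_spec φ j' hm'
  have hψm : ∀ t, ψ.toOrderHom t ≠ jl := by
    intro t ht
    apply hm t
    have hφt : φ.toOrderHom t = (δ j').toOrderHom (ψ.toOrderHom t) := by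
      rw [← hψ]; rfl
    rw [hφt, ht, delta_eval, Fin.succAbove_of_castSucc_lt _ _ (by
      rw [hcastjl]; exact hlt), hcastjl]
  set e := factor_δ ψ jl with hedef
  have he : e ≫ δ jl = ψ := factor_δ_spec ψ jl hψm
  have hdd : δ jl ≫ δ j' = δ jp ≫ δ j := by
    have h0 := SimplexCategory.δ_comp_δ (n := n) (i := jl) (j := jp)
      (by rw [Fin.le_def]; simp [jl, jp]; omega)
    rwa [hsuccjp, hcastjl] at h0
  have h1 : factor_δ φ j = e ≫ δ jp := by
    have h2 : (e ≫ δ jp) ≫ δ j = φ := by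
      rw [Category.assoc, ← hdd, ← Category.assoc, he, hψ]
    exact (cancel_mono (δ j)).1 ((factor_δ_spec φ j hm).trans h2.symm)
  rw [h1, ← he, op_comp, op_comp, FunctorToTypes.map_comp_apply,
    FunctorToTypes.map_comp_apply, ← sset_delta_def, ← sset_delta_def]
  have h4 := compat j j' hjv hj hj'
  have h5 : (⟨(j : ℕ), by omega⟩ : Fin (n + 2)) = jl := rfl
  have h6 : (⟨(j' : ℕ) - 1, by omega⟩ : Fin (n + 2)) = jp := rfl
  rw [h5, h6] at h4
  rw [h4]

open SimplexCategory in
lemma factor_indep {n : ℕ} (X : SSet.{u}) (i : Fin (n + 3)) (x : Fin (n + 3) → X _⦋n + 1⦌)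
    (compat : ∀ (j k : Fin (n + 3)) (h : (j : ℕ) < (k : ℕ)) (hj : j ≠ i) (hk : k ≠ i),
      X.δ ⟨j, by omega⟩ (x k) = X.δ ⟨(k : ℕ) - 1, by omega⟩ (x j))
    {k : ℕ} (φ : (⦋k⦌ : SimplexCategory) ⟶ ⦋n + 2⦌) (j j' : Fin (n + 3))
    (hj : j ≠ i) (hj' : j' ≠ i)
    (hm : ∀ t, φ.toOrderHom t ≠ j) (hm' : ∀ t, φ.toOrderHom t ≠ j') :
    X.map (factor_δ φ j).op (x j) = X.map (factor_δ φ j').op (x j') := by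
  rcases lt_trichotomy j j' with h | h | h
  · exact factor_indep_lt X i x compat φ j j' hj hj' h hm hm'
  · subst h; rfl
  · exact (factor_indep_lt X i x compat φ j' j hj' hj h hm' hm).symm

open SimplexCategory in
/-- The underlying morphism of a simplex of the standard simplex. -/
def φof {n : ℕ} {m : SimplexCategoryᵒᵖ} (α : (Δ[n] : SSet.{u}).obj m) :
    (⦋m.unop.len⦌ : SimplexCategory) ⟶ ⦋n⦌ := α.down

open SimplexCategory in
lemma exists_missed' {n : ℕ} {i : Fin (n + 3)} {m : SimplexCategoryᵒᵖ}
    (α : (Λ[n + 2, i] : SSet.{u}).obj m) :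
    ∃ j : Fin (n + 3), j ≠ i ∧ ∀ t, (φof α.1).toOrderHom t ≠ j := by
  have h2 : Set.range (SSet.stdSimplex.asOrderHom α.1) ∪ {i} ≠ Set.univ := α.2
  rw [Set.ne_univ_iff_exists_notMem] at h2
  obtain ⟨j, hj⟩ := h2
  simp only [Set.mem_union, Set.mem_range, Set.mem_singleton_iff, not_or, not_exists] at hj
  exact ⟨j, hj.2, fun t ht => hj.1 t ht⟩

open SimplexCategory in
/-- A horn map built from a compatible family of faces. -/
noncomputable def hornMk {n : ℕ} (X : SSet.{u}) (i : Fin (n + 3)) (x : Fin (n + 3) → X _⦋n + 1⦌)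
    (compat : ∀ (j k : Fin (n + 3)) (h : (j : ℕ) < (k : ℕ)) (hj : j ≠ i) (hk : k ≠ i),
      X.δ ⟨j, by omega⟩ (x k) = X.δ ⟨(k : ℕ) - 1, by omega⟩ (x j)) :
    (Λ[n + 2, i] : SSet.{u}) ⟶ X where
  app m := TypeCat.ofHom fun α =>
    X.map (factor_δ (φof α.1) (exists_missed' α).choose).op (x (exists_missed' α).choose)
  naturality := by
    intro m m' t
    ext α
    set α' := (Λ[n + 2, i] : SSet.{u}).map t α with hα'
    show X.map (factor_δ (φof α'.1) (exists_missed' α').choose).op (x (exists_missed' α').choose)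
      = X.map t (X.map (factor_δ (φof α.1) (exists_missed' α).choose).op
          (x (exists_missed' α).choose))
    obtain ⟨hne, hmiss⟩ := (exists_missed' α).choose_spec
    obtain ⟨hne', hmiss'⟩ := (exists_missed' α').choose_spec
    have hφ' : φof α'.1 = t.unop ≫ φof α.1 := rfl
    have hmiss2 : ∀ s, (t.unop ≫ φof α.1).toOrderHom s ≠ (exists_missed' α).choose :=
      fun s => hmiss _
    have step1 := factor_indep X i x compat (φof α'.1)
      (exists_missed' α').choose (exists_missed' α).choose hne' hne hmiss'
      (by rw [hφ']; exact hmiss2)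
    rw [step1]
    have hfac : factor_δ (φof α'.1) (exists_missed' α).choose
        = t.unop ≫ factor_δ (φof α.1) (exists_missed' α).choose := by
      rw [hφ']; exact Category.assoc _ _ _
    rw [hfac, op_comp, FunctorToTypes.map_comp_apply, Quiver.Hom.op_unop]

open SimplexCategory in
lemma hornMk_face {n : ℕ} (X : SSet.{u}) (i : Fin (n + 3)) (x : Fin (n + 3) → X _⦋n + 1⦌)
    (compat : ∀ (j k : Fin (n + 3)) (h : (j : ℕ) < (k : ℕ)) (hj : j ≠ i) (hk : k ≠ i),
      X.δ ⟨j, by omega⟩ (x k) = X.δ ⟨(k : ℕ) - 1, by omega⟩ (x j))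
    (j : Fin (n + 3)) (hj : j ≠ i) :
    (hornMk X i x compat).app (op ⦋n + 1⦌) (SSet.horn.face i j hj) = x j := by
  set α := SSet.horn.face i j hj with hα
  show X.map (factor_δ (φof α.1) (exists_missed' α).choose).op (x (exists_missed' α).choose) = x j
  obtain ⟨hne, hmiss⟩ := (exists_missed' α).choose_spec
  have hα1 : φof α.1 = SimplexCategory.δ j := rfl
  have hmissj : ∀ t, (SimplexCategory.δ j).toOrderHom t ≠ j :=
    fun t => Fin.succAbove_ne j t
  have step1 := factor_indep X i x compat (φof α.1)
    (exists_missed' α).choose j hne hj hmiss (by rw [hα1]; exact hmissj)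
  rw [step1, hα1]
  have hid : factor_δ (SimplexCategory.δ j) j = 𝟙 _ := by
    apply (cancel_mono (SimplexCategory.δ j)).1
    rw [factor_δ_spec (SimplexCategory.δ j) j hmissj, Category.id_comp]
  rw [hid]
  simp

open SimplexCategory in
/-- Inner horn filling for an `n`-category, from a compatible family of faces. -/
lemma fill {nn : ℕ} (X : SSet.{u}) (hX : IsNCategory nn X) {n : ℕ} (i : Fin (n + 3))
    (h0 : 0 < (i : ℕ)) (htop : (i : ℕ) < n + 2)
    (x : Fin (n + 3) → X _⦋n + 1⦌)
    (compat : ∀ (j k : Fin (n + 3)) (h : (j : ℕ) < (k : ℕ)) (hj : j ≠ i) (hk : k ≠ i),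
      X.δ ⟨j, by omega⟩ (x k) = X.δ ⟨(k : ℕ) - 1, by omega⟩ (x j)) :
    ∃ α : X _⦋n + 2⦌, ∀ (j : Fin (n + 3)) (_ : j ≠ i), X.δ j α = x j := by
  obtain ⟨τ, hτ⟩ := hX.1 (n + 2) i h0 htop (hornMk X i x compat)
  refine ⟨τ.app (op ⦋n + 2⦌) (SSet.stdSimplex.objEquiv.symm (𝟙 ⦋n + 2⦌)), fun j hj => ?_⟩
  have hnat := NatTrans.naturality_apply τ (SimplexCategory.δ j).op
    (SSet.stdSimplex.objEquiv.symm (𝟙 ⦋n + 2⦌))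
  have hmapid : (Δ[n + 2] : SSet.{u}).map (SimplexCategory.δ j).op
        (SSet.stdSimplex.objEquiv.symm (𝟙 ⦋n + 2⦌))
      = Λ[n + 2, i].ι.app (op ⦋n + 1⦌) (SSet.horn.face i j hj) := by
    apply congrArg ULift.up
    show SimplexCategory.δ j ≫ 𝟙 _ = SimplexCategory.δ j
    rw [Category.comp_id]
  rw [sset_delta_def, ← hnat, hmapid]
  have hfin := congrArg (fun (σ : (Λ[n+2,i] : SSet.{u}) ⟶ X) => σ.app (op ⦋n+1⦌)
    (SSet.horn.face i j hj)) hτ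
  simp only at hfin
  rw [FunctorToTypes.comp] at hfin
  rw [← hfin, hornMk_face]

lemma fin1_funext {β : Sort*} {e e' : Fin 1 → β} (h : e 0 = e' 0) : e = e' :=
  funext fun t => by rw [Subsingleton.elim t 0]; exact h

open SimplexCategory in
lemma tplus_delta {m : ℕ} (i : Fin (m + 2)) :
    tplus (SimplexCategory.δ i) = SimplexCategory.δ i.succ := by
  ext t : 3
  induction t using Fin.cases with
  | zero =>
    show (0 : Fin (m + 3)) = i.succ.succAbove 0
    rw [Fin.succAbove_of_castSucc_lt _ _ (by rw [Fin.castSucc_zero]; exact Fin.succ_pos i)]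
    rfl
  | succ s =>
    show (i.succAbove s).succ = i.succ.succAbove s.succ
    rw [Fin.succ_succAbove_succ]

open SimplexCategory in
lemma delta_toOrderHom_zero {m : ℕ} (j : Fin (m + 2)) (hj : j ≠ 0) :
    (SimplexCategory.δ j).toOrderHom 0 = 0 := by
  rw [delta_eval, Fin.succAbove_of_castSucc_lt _ _
    (by rw [Fin.castSucc_zero]; exact Fin.pos_of_ne_zero hj)]
  rfl

open SimplexCategory in
lemma vertex_delta {X : SSet.{u}} {m : ℕ} (g : X _⦋m + 1⦌) (j : Fin (m + 2)) (hj : j ≠ 0) :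
    X.map (SimplexCategory.const ⦋0⦌ ⦋m⦌ 0).op (X.δ j g)
      = X.map (SimplexCategory.const ⦋0⦌ ⦋m + 1⦌ 0).op g := by
  rw [sset_delta_def, ← FunctorToTypes.map_comp_apply, ← op_comp, SimplexCategory.const_comp,
    delta_toOrderHom_zero j hj]

open SimplexCategory in
lemma delta_comp_delta (X : SSet.{u}) {m : ℕ} (i j : Fin (m + 2)) (H : i ≤ j) (y : X _⦋m + 2⦌) :
    X.δ i (X.δ j.succ y) = X.δ j (X.δ i.castSucc y) := by
  rw [sset_delta_def, sset_delta_def, sset_delta_def, sset_delta_def,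
    ← FunctorToTypes.map_comp_apply, ← FunctorToTypes.map_comp_apply,
    ← op_comp, ← op_comp, SimplexCategory.δ_comp_δ H]

open SimplexCategory in
lemma homL_delta_fst {X : SSet.{u}} {a : X _⦋0⦌} {l : ℕ} (f : Disc.{u} l ⟶ X) {m : ℕ}
    (i : Fin (m + 2)) (p : (HomL X a f).obj (op ⦋m + 1⦌)) :
    (((HomL X a f).δ i p).1.1) = X.δ i.succ p.1.1 := by
  show X.map (tplus (SimplexCategory.δ i)).op p.1.1 = _
  rw [tplus_delta, sset_delta_def]

lemma homL_delta_snd {X : SSet.{u}} {a : X _⦋0⦌} {l : ℕ} (f : Disc.{u} l ⟶ X) {m : ℕ}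
    (i : Fin (m + 2)) (p : (HomL X a f).obj (op ⦋m + 1⦌)) :
    (((HomL X a f).δ i p).1.2) = fun t => p.1.2 (i.succAbove t) := rfl

lemma mem_skset_succ {Y : SSet.{u}} {ay : Y _⦋0⦌} {k : ℕ} {α : Y _⦋k + 1⦌}
    (hm : α ∈ SKset Y ay (k + 1)) :
    ∀ i : Fin (k + 2), Y.δ i α = constSimplex Y ay k := hm

open SimplexCategory in
lemma forced_e {X : SSet.{u}} {a : X _⦋0⦌} {l' : ℕ} (f' : Disc.{u} l' ⟶ X)
    (a' : (HomL X a f') _⦋0⦌) {K : ℕ} (α : (HomL X a f').obj (op ⦋K + 1⦌))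
    (hα : α ∈ SKset (HomL X a f') a' (K + 1)) :
    α.1.2 = fun _ => a'.1.2 0 := by
  have hm : ∀ i : Fin (K + 2), (HomL X a f').δ i α = constSimplex (HomL X a f') a' K := hα
  funext t
  have hex : ∃ i : Fin (K + 2), i ≠ t := by
    by_cases ht : t = 0
    · refine ⟨1, fun hh => ?_⟩
      rw [ht] at hh
      exact one_ne_zero (congrArg Fin.val hh)
    · exact ⟨0, fun hh => ht hh.symm⟩
  obtain ⟨i, hi⟩ := hex
  obtain ⟨s, hs⟩ := Fin.exists_succAbove_eq (Ne.symm hi)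
  have h3 := congrFun (congrArg (fun z => z.1.2) (hm i)) s
  show α.1.2 t = a'.1.2 0
  rw [← hs]
  exact h3

section PosCase

variable {X : SSet.{u}} {a : X _⦋0⦌} {r l : ℕ}

open SimplexCategory in
/-- The inverse map on `SKset`s, for positive dimensions. -/
def invSK (f : Disc.{u} l ⟶ X) (h : Fin (r + 1) → Fin (l + 1))
    (a' : (HomL X a (discMap h ≫ f)) _⦋0⦌) (K : ℕ)
    (β : ↥(SKset (HomL X a f) ((homLWhisker X a h f).app (op ⦋0⦌) a') (K + 1))) :
    ↥(SKset (HomL X a (discMap h ≫ f)) a' (K + 1)) := by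
  refine ⟨⟨(β.1.1.1, fun _ => a'.1.2 0), β.1.2.1, ?_⟩, ?_⟩
  · -- second membership condition
    have hβe : β.1.1.2 = fun _ => ULift.up (h ((a'.1.2 0).down)) :=
      forced_e f _ β.1 β.2
    have hB := β.1.2.2
    rw [hβe] at hB
    exact hB
  · -- SKset membership
    intro i
    apply Subtype.ext
    apply Prod.ext
    · exact congrArg (fun z => z.1.1) (mem_skset_succ β.2 i)
    · rfl

lemma invSK_wht (f : Disc.{u} l ⟶ X) (h : Fin (r + 1) → Fin (l + 1))
    (a' : (HomL X a (discMap h ≫ f)) _⦋0⦌) (K : ℕ)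
    (α : ↥(SKset (HomL X a (discMap h ≫ f)) a' (K + 1))) :
    invSK f h a' K ⟨(homLWhisker X a h f).app (op ⦋K + 1⦌) α.1,
      skMap_mem (homLWhisker X a h f) a' (K + 1) α⟩ = α := by
  apply Subtype.ext
  apply Subtype.ext
  apply Prod.ext
  · rfl
  · exact (forced_e _ a' α.1 α.2).symm

lemma wht_invSK (f : Disc.{u} l ⟶ X) (h : Fin (r + 1) → Fin (l + 1))
    (a' : (HomL X a (discMap h ≫ f)) _⦋0⦌) (K : ℕ)
    (β : ↥(SKset (HomL X a f) ((homLWhisker X a h f).app (op ⦋0⦌) a') (K + 1))) :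
    (homLWhisker X a h f).app (op ⦋K + 1⦌) (invSK f h a' K β).1 = β.1 := by
  apply Subtype.ext
  apply Prod.ext
  · rfl
  · exact (forced_e f _ β.1 β.2).symm

open SimplexCategory in
lemma htpy_pullback (f : Disc.{u} l ⟶ X) (h : Fin (r + 1) → Fin (l + 1))
    (a' : (HomL X a (discMap h ≫ f)) _⦋0⦌) (K : ℕ)
    (β γ : ↥(SKset (HomL X a f) ((homLWhisker X a h f).app (op ⦋0⦌) a') (K + 1)))
    (hbg : Htpy (HomL X a f) β.1 γ.1) :
    Htpy (HomL X a (discMap h ≫ f)) (invSK f h a' K β).1 (invSK f h a' K γ).1 := by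
  obtain ⟨H, hd0, hd1, hrest⟩ := hbg
  have hβe : β.1.1.2 = fun _ => ULift.up (h ((a'.1.2 0).down)) := forced_e f _ β.1 β.2
  -- the e-component of H is constant
  have hE : H.1.2 = fun _ => ULift.up (h ((a'.1.2 0).down)) := by
    funext s
    induction s using Fin.cases with
    | zero =>
      have h2 := congrFun (congrArg (fun z => z.1.2) hd1) 0
      have hγe : γ.1.1.2 = fun _ => ULift.up (h ((a'.1.2 0).down)) := forced_e f _ γ.1 γ.2
      have hsa : (1 : Fin (K + 3)).succAbove 0 = 0 := by
        have h01 : Fin.castSucc (0 : Fin (K + 2)) < (1 : Fin (K + 3)) := by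
          simp [Fin.lt_def]
        rw [Fin.succAbove_of_castSucc_lt _ _ h01, Fin.castSucc_zero]
      have h3 : H.1.2 ((1 : Fin (K + 3)).succAbove 0) = γ.1.1.2 0 := h2
      rw [hsa, hγe] at h3
      exact h3
    | succ s =>
      have h2 := congrFun (congrArg (fun z => z.1.2) hd0) s
      have h3 : H.1.2 ((0 : Fin (K + 3)).succAbove s) = β.1.1.2 s := h2
      rw [Fin.zero_succAbove, hβe] at h3
      exact h3
  refine ⟨⟨(H.1.1, fun _ => a'.1.2 0), H.2.1, ?_⟩, ?_, ?_, ?_⟩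
  · have hB := H.2.2
    rw [hE] at hB
    exact hB
  · apply Subtype.ext
    apply Prod.ext
    · exact congrArg (fun z => z.1.1) hd0
    · rfl
  · apply Subtype.ext
    apply Prod.ext
    · exact congrArg (fun z => z.1.1) hd1
    · rfl
  · intro i hi
    apply Subtype.ext
    apply Prod.ext
    · exact congrArg (fun z => z.1.1) (hrest i hi)
    · rfl

open SimplexCategory in
lemma piMap_bij_pos (f : Disc.{u} l ⟶ X) (h : Fin (r + 1) → Fin (l + 1)) (a : X _⦋0⦌)
    (a' : (HomL X a (discMap h ≫ f)) _⦋0⦌) (K : ℕ) :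
    Function.Bijective (piMap (homLWhisker X a h f) a' (K + 1)) := by
  apply Function.bijective_iff_has_inverse.mpr
  refine ⟨Quot.lift (fun β => Quot.mk _ (invSK f h a' K β))
    (fun β γ hbg => Quot.sound (htpy_pullback f h a' K β γ hbg)), ?_, ?_⟩
  · intro q
    induction q using Quot.ind with
    | _ α =>
      exact congrArg (Quot.mk _) (invSK_wht f h a' K α)
  · intro q
    induction q using Quot.ind with
    | _ β =>
      exact congrArg (Quot.mk _) (Subtype.ext (wht_invSK f h a' K β))

end PosCase

lemma fin2_funext {β : Sort*} {e e' : Fin 2 → β} (h0 : e 0 = e' 0) (h1 : e 1 = e' 1) : e = e' :=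
  funext fun t => by fin_cases t <;> assumption

section ZeroCase

open SimplexCategory

variable {X : SSet.{u}} {a : X _⦋0⦌} {r l : ℕ} (f : Disc.{u} l ⟶ X)
  (h : Fin (r + 1) → Fin (l + 1))

/-- The edge of `D^l` from the vertex of `p` to the distinguished vertex. -/
def Ep (a' : (HomL X a (discMap h ≫ f)) _⦋0⦌) (p : (HomL X a f) _⦋0⦌) :
    (Disc.{u} l).obj (op ⦋1⦌) :=
  fun t => Fin.cases (p.1.2 0) (fun _ => ULift.up (h ((a'.1.2 0).down))) t

variable {nn : ℕ}

lemma exists_G (hX : IsNCategory nn X) (a' : (HomL X a (discMap h ≫ f)) _⦋0⦌)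
    (p : (HomL X a f) _⦋0⦌) :
    ∃ G : X _⦋2⦌, X.δ 0 G = f.app (op ⦋1⦌) (Ep f h a' p) ∧ X.δ 2 G = p.1.1 := by
  obtain ⟨G, hG⟩ := fill X hX (n := 0) 1 (by decide) (by decide)
    (fun j => Fin.cases (f.app (op ⦋1⦌) (Ep f h a' p)) (fun _ => p.1.1) j) (by
    intro j k hjk hj hk
    have hjv : (j : ℕ) ≠ 1 := fun hh => hj (Fin.ext hh)
    have hkv : (k : ℕ) ≠ 1 := fun hh => hk (Fin.ext hh)
    have hk3 := k.isLt
    obtain rfl : j = ⟨0, by decide⟩ := Fin.ext (show (j : ℕ) = 0 by omega)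
    obtain rfl : k = ⟨2, by decide⟩ := Fin.ext (show (k : ℕ) = 2 by omega)
    show X.δ (0 : Fin 2) p.1.1 = X.δ (1 : Fin 2) (f.app (op ⦋1⦌) (Ep f h a' p))
    have hL : X.δ (0 : Fin 2) p.1.1 = f.app (op ⦋0⦌) p.1.2 := p.2.2
    have hR : X.δ (1 : Fin 2) (f.app (op ⦋1⦌) (Ep f h a' p))
        = f.app (op ⦋0⦌) ((Disc.{u} l).δ 1 (Ep f h a' p)) := (map_delta f 1 _).symm
    rw [hL, hR]
    apply congrArg
    apply fin1_funext
    show Ep f h a' p ((1 : Fin 2).succAbove 0) = p.1.2 0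
    rw [show (1 : Fin 2).succAbove 0 = 0 by decide]
    rfl)
  exact ⟨G, hG 0 (by decide), hG 2 (by decide)⟩

/-- The chosen 2-simplex over a vertex of the target. -/
noncomputable def Gp (hX : IsNCategory nn X) (a' : (HomL X a (discMap h ≫ f)) _⦋0⦌)
    (p : (HomL X a f) _⦋0⦌) : X _⦋2⦌ :=
  (exists_G f h hX a' p).choose

lemma Gp_d0 (hX : IsNCategory nn X) (a' : (HomL X a (discMap h ≫ f)) _⦋0⦌)
    (p : (HomL X a f) _⦋0⦌) :
    X.δ 0 (Gp f h hX a' p) = f.app (op ⦋1⦌) (Ep f h a' p) :=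
  (exists_G f h hX a' p).choose_spec.1

lemma Gp_d2 (hX : IsNCategory nn X) (a' : (HomL X a (discMap h ≫ f)) _⦋0⦌)
    (p : (HomL X a f) _⦋0⦌) :
    X.δ 2 (Gp f h hX a' p) = p.1.1 :=
  (exists_G f h hX a' p).choose_spec.2

lemma disc_comp_app {k : SimplexCategoryᵒᵖ} (e : (Disc.{u} r).obj k) :
    (discMap h ≫ f).app k e = f.app k (fun j => ULift.up (h (e j).down)) := rfl

/-- The pullback vertex. -/
noncomputable def pb (hX : IsNCategory nn X) (a' : (HomL X a (discMap h ≫ f)) _⦋0⦌)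
    (p : (HomL X a f) _⦋0⦌) : (HomL X a (discMap h ≫ f)) _⦋0⦌ := by
  refine ⟨(X.δ 1 (Gp f h hX a' p), fun _ => a'.1.2 0), ?_, ?_⟩
  · show X.map (SimplexCategory.const ⦋0⦌ ⦋1⦌ 0).op (X.δ 1 (Gp f h hX a' p)) = a
    rw [vertex_delta _ 1 (by decide), ← vertex_delta (Gp f h hX a' p) 2 (by decide),
      Gp_d2 f h hX a' p]
    exact p.2.1
  · show X.δ 0 (X.δ 1 (Gp f h hX a' p)) = _
    have hdd := delta_comp_delta X (0 : Fin 2) (0 : Fin 2) (le_refl _) (Gp f h hX a' p)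
    rw [show (0 : Fin 2).succ = 1 from rfl, show (0 : Fin 2).castSucc = 0 from rfl] at hdd
    rw [hdd, Gp_d0 f h hX a' p, ← map_delta f 0 (Ep f h a' p), disc_comp_app]
    apply congrArg
    apply fin1_funext
    show Ep f h a' p ((0 : Fin 2).succAbove 0) = _
    rw [show (0 : Fin 2).succAbove 0 = 1 by decide]
    rfl

lemma htpy_W_pb (hX : IsNCategory nn X) (a' : (HomL X a (discMap h ≫ f)) _⦋0⦌)
    (p : (HomL X a f) _⦋0⦌) :
    Htpy (HomL X a f)
      ((homLWhisker X a h f).app (op ⦋0⦌) (pb f h hX a' p)) p := by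
  refine ⟨⟨(Gp f h hX a' p, Ep f h a' p), ?_, ?_⟩, ?_, ?_, ?_⟩
  · show X.map (SimplexCategory.const ⦋0⦌ ⦋2⦌ 0).op (Gp f h hX a' p) = a
    rw [← vertex_delta (Gp f h hX a' p) 2 (by decide), Gp_d2 f h hX a' p]
    exact p.2.1
  · exact Gp_d0 f h hX a' p
  · apply Subtype.ext
    apply Prod.ext
    · refine (homL_delta_fst _ _ _).trans ?_
      rfl
    · apply fin1_funext
      show Ep f h a' p ((0 : Fin 2).succAbove 0) = _
      rw [show (0 : Fin 2).succAbove 0 = 1 by decide]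
      rfl
  · apply Subtype.ext
    apply Prod.ext
    · refine (homL_delta_fst _ _ _).trans ?_
      exact Gp_d2 f h hX a' p
    · apply fin1_funext
      show Ep f h a' p ((1 : Fin 2).succAbove 0) = p.1.2 0
      rw [show (1 : Fin 2).succAbove 0 = 0 by decide]
      rfl
  · intro i hi
    exact absurd i.isLt (by omega)

lemma htpy_pb_W (hX : IsNCategory nn X) (a' : (HomL X a (discMap h ≫ f)) _⦋0⦌)
    (α : (HomL X a (discMap h ≫ f)) _⦋0⦌) :
    Htpy (HomL X a (discMap h ≫ f))
      (pb f h hX a' ((homLWhisker X a h f).app (op ⦋0⦌) α)) α := by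
  set p := (homLWhisker X a h f).app (op ⦋0⦌) α with hp
  refine ⟨⟨(Gp f h hX a' p, fun t => Fin.cases (α.1.2 0) (fun _ => a'.1.2 0) t), ?_, ?_⟩,
    ?_, ?_, ?_⟩
  · show X.map (SimplexCategory.const ⦋0⦌ ⦋2⦌ 0).op (Gp f h hX a' p) = a
    rw [← vertex_delta (Gp f h hX a' p) 2 (by decide), Gp_d2 f h hX a' p]
    exact α.2.1
  · show X.map (SimplexCategory.δ 0).op (Gp f h hX a' p) = _
    rw [← sset_delta_def, Gp_d0 f h hX a' p, disc_comp_app]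
    apply congrArg
    apply fin2_funext
    · rfl
    · rfl
  · apply Subtype.ext
    apply Prod.ext
    · refine (homL_delta_fst _ _ _).trans ?_
      rfl
    · apply fin1_funext
      rfl
  · apply Subtype.ext
    apply Prod.ext
    · refine (homL_delta_fst _ _ _).trans ?_
      exact Gp_d2 f h hX a' p
    · apply fin1_funext
      rfl
  · intro i hi
    exact absurd i.isLt (by omega)

lemma pb_welldef (hX : IsNCategory nn X) (a' : (HomL X a (discMap h ≫ f)) _⦋0⦌)
    (p q : (HomL X a f) _⦋0⦌) (hpq : Htpy (HomL X a f) p q) :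
    Htpy (HomL X a (discMap h ≫ f)) (pb f h hX a' q) (pb f h hX a' p) := by
  obtain ⟨K, hd0, hd1, _⟩ := hpq
  have hK1 : X.δ 1 K.1.1 = p.1.1 := by
    have hh : ((HomL X a f).δ 0 K).1.1 = p.1.1 := congrArg (fun z => z.1.1) hd0
    rwa [homL_delta_fst] at hh
  have hK2 : X.δ 2 K.1.1 = q.1.1 := by
    have hh : ((HomL X a f).δ 1 K).1.1 = q.1.1 := congrArg (fun z => z.1.1) hd1
    rwa [homL_delta_fst] at hh
  have hEK1 : K.1.2 1 = p.1.2 0 := by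
    have hh : K.1.2 ((0 : Fin 2).succAbove 0) = p.1.2 0 :=
      congrFun (congrArg (fun z => z.1.2) hd0) 0
    rwa [show (0 : Fin 2).succAbove 0 = 1 by decide] at hh
  have hEK0 : K.1.2 0 = q.1.2 0 := by
    have hh : K.1.2 ((1 : Fin 2).succAbove 0) = q.1.2 0 :=
      congrFun (congrArg (fun z => z.1.2) hd1) 0
    rwa [show (1 : Fin 2).succAbove 0 = 0 by decide] at hh
  -- the triangle of D^l over vertices (q, p, *)
  set T3 : (Disc.{u} l).obj (op ⦋2⦌) := fun t => Fin.cases (q.1.2 0)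
    (fun s => Fin.cases (p.1.2 0) (fun _ => ULift.up (h ((a'.1.2 0).down))) s) t with hT3
  -- first inner horn fill
  obtain ⟨W1, hW⟩ := fill X hX (n := 1) 1 (by decide) (by decide)
    (fun j => Fin.cases (f.app (op ⦋2⦌) T3)
      (fun s => Fin.cases K.1.1 (fun s' => Fin.cases (Gp f h hX a' q)
        (fun _ => K.1.1) s') s) j) (by
    intro j k hjk hj hk
    have hjv : (j : ℕ) ≠ 1 := fun hh => hj (Fin.ext hh)
    have hkv : (k : ℕ) ≠ 1 := fun hh => hk (Fin.ext hh)
    have hk4 := k.isLt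
    rcases (by omega : ((j : ℕ) = 0 ∧ (k : ℕ) = 2) ∨ ((j : ℕ) = 0 ∧ (k : ℕ) = 3)
        ∨ ((j : ℕ) = 2 ∧ (k : ℕ) = 3)) with ⟨h1, h2⟩ | ⟨h1, h2⟩ | ⟨h1, h2⟩
    · obtain rfl : j = ⟨0, by decide⟩ := Fin.ext (show (j : ℕ) = 0 by omega)
      obtain rfl : k = ⟨2, by decide⟩ := Fin.ext (show (k : ℕ) = 2 by omega)
      show X.δ (0 : Fin 3) (Gp f h hX a' q) = X.δ (1 : Fin 3) (f.app (op ⦋2⦌) T3)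
      rw [Gp_d0 f h hX a' q, ← map_delta f 1 T3]
      apply congrArg
      apply fin2_funext
      · show q.1.2 0 = T3 ((1 : Fin 3).succAbove 0)
        rw [show (1 : Fin 3).succAbove 0 = 0 by decide]
        rfl
      · show ULift.up (h ((a'.1.2 0).down)) = T3 ((1 : Fin 3).succAbove 1)
        rw [show (1 : Fin 3).succAbove 1 = 2 by decide]
        rfl
    · obtain rfl : j = ⟨0, by decide⟩ := Fin.ext (show (j : ℕ) = 0 by omega)
      obtain rfl : k = ⟨3, by decide⟩ := Fin.ext (show (k : ℕ) = 3 by omega)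
      show X.δ (0 : Fin 3) K.1.1 = X.δ (2 : Fin 3) (f.app (op ⦋2⦌) T3)
      have hB : X.δ (0 : Fin 3) K.1.1 = f.app (op ⦋1⦌) K.1.2 := K.2.2
      rw [hB, ← map_delta f 2 T3]
      apply congrArg
      apply fin2_funext
      · show K.1.2 0 = T3 ((2 : Fin 3).succAbove 0)
        rw [show (2 : Fin 3).succAbove 0 = 0 by decide, hEK0]
        rfl
      · show K.1.2 1 = T3 ((2 : Fin 3).succAbove 1)
        rw [show (2 : Fin 3).succAbove 1 = 1 by decide, hEK1]
        rfl
    · obtain rfl : j = ⟨2, by decide⟩ := Fin.ext (show (j : ℕ) = 2 by omega)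
      obtain rfl : k = ⟨3, by decide⟩ := Fin.ext (show (k : ℕ) = 3 by omega)
      show X.δ (2 : Fin 3) K.1.1 = X.δ (2 : Fin 3) (Gp f h hX a' q)
      rw [hK2, Gp_d2 f h hX a' q])
  -- extract the new triangle N
  have hW0 : X.δ 0 W1 = f.app (op ⦋2⦌) T3 := hW 0 (by decide)
  have hW2 : X.δ 2 W1 = Gp f h hX a' q := hW 2 (by decide)
  have hW3 : X.δ 3 W1 = K.1.1 := hW 3 (by decide)
  set N := X.δ 1 W1 with hN
  have hN0 : X.δ 0 N = f.app (op ⦋1⦌) (Ep f h a' p) := by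
    have hdd := delta_comp_delta X (0 : Fin 3) (0 : Fin 3) (le_refl _) W1
    rw [show (0 : Fin 3).succ = 1 from rfl, show (0 : Fin 3).castSucc = 0 from rfl] at hdd
    rw [hN, hdd, hW0, ← map_delta f 0 T3]
    apply congrArg
    apply fin2_funext
    · show T3 ((0 : Fin 3).succAbove 0) = p.1.2 0
      rw [show (0 : Fin 3).succAbove 0 = 1 by decide]
      rfl
    · show T3 ((0 : Fin 3).succAbove 1) = ULift.up (h ((a'.1.2 0).down))
      rw [show (0 : Fin 3).succAbove 1 = 2 by decide]
      rfl
  have hN1 : X.δ 1 N = X.δ 1 (Gp f h hX a' q) := by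
    have hdd := delta_comp_delta X (1 : Fin 3) (1 : Fin 3) (le_refl _) W1
    rw [show (1 : Fin 3).succ = 2 from rfl, show (1 : Fin 3).castSucc = 1 from rfl] at hdd
    rw [hN, ← hdd, hW2]
  have hN2 : X.δ 2 N = p.1.1 := by
    have hdd := delta_comp_delta X (1 : Fin 3) (2 : Fin 3) (by decide) W1
    rw [show (2 : Fin 3).succ = 3 from rfl, show (1 : Fin 3).castSucc = 1 from rfl] at hdd
    rw [hN, ← hdd, hW3, hK1]
  -- second inner horn fill
  set T4 : (Disc.{u} l).obj (op ⦋2⦌) := fun t => Fin.cases (p.1.2 0)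
    (fun _ => ULift.up (h ((a'.1.2 0).down))) t with hT4
  obtain ⟨W2, hV⟩ := fill X hX (n := 1) 1 (by decide) (by decide)
    (fun j => Fin.cases (f.app (op ⦋2⦌) T4)
      (fun s => Fin.cases N (fun s' => Fin.cases N
        (fun _ => Gp f h hX a' p) s') s) j) (by
    intro j k hjk hj hk
    have hjv : (j : ℕ) ≠ 1 := fun hh => hj (Fin.ext hh)
    have hkv : (k : ℕ) ≠ 1 := fun hh => hk (Fin.ext hh)
    have hk4 := k.isLt
    rcases (by omega : ((j : ℕ) = 0 ∧ (k : ℕ) = 2) ∨ ((j : ℕ) = 0 ∧ (k : ℕ) = 3)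
        ∨ ((j : ℕ) = 2 ∧ (k : ℕ) = 3)) with ⟨h1, h2⟩ | ⟨h1, h2⟩ | ⟨h1, h2⟩
    · obtain rfl : j = ⟨0, by decide⟩ := Fin.ext (show (j : ℕ) = 0 by omega)
      obtain rfl : k = ⟨2, by decide⟩ := Fin.ext (show (k : ℕ) = 2 by omega)
      show X.δ (0 : Fin 3) N = X.δ (1 : Fin 3) (f.app (op ⦋2⦌) T4)
      rw [hN0, ← map_delta f 1 T4]
      apply congrArg
      apply fin2_funext
      · show p.1.2 0 = T4 ((1 : Fin 3).succAbove 0)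
        rw [show (1 : Fin 3).succAbove 0 = 0 by decide]
        rfl
      · show ULift.up (h ((a'.1.2 0).down)) = T4 ((1 : Fin 3).succAbove 1)
        rw [show (1 : Fin 3).succAbove 1 = 2 by decide]
        rfl
    · obtain rfl : j = ⟨0, by decide⟩ := Fin.ext (show (j : ℕ) = 0 by omega)
      obtain rfl : k = ⟨3, by decide⟩ := Fin.ext (show (k : ℕ) = 3 by omega)
      show X.δ (0 : Fin 3) (Gp f h hX a' p) = X.δ (2 : Fin 3) (f.app (op ⦋2⦌) T4)
      rw [Gp_d0 f h hX a' p, ← map_delta f 2 T4]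
      apply congrArg
      apply fin2_funext
      · show p.1.2 0 = T4 ((2 : Fin 3).succAbove 0)
        rw [show (2 : Fin 3).succAbove 0 = 0 by decide]
        rfl
      · show ULift.up (h ((a'.1.2 0).down)) = T4 ((2 : Fin 3).succAbove 1)
        rw [show (2 : Fin 3).succAbove 1 = 1 by decide]
        rfl
    · obtain rfl : j = ⟨2, by decide⟩ := Fin.ext (show (j : ℕ) = 2 by omega)
      obtain rfl : k = ⟨3, by decide⟩ := Fin.ext (show (k : ℕ) = 3 by omega)
      show X.δ (2 : Fin 3) (Gp f h hX a' p) = X.δ (2 : Fin 3) N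
      rw [hN2, Gp_d2 f h hX a' p])
  have hV0 : X.δ 0 W2 = f.app (op ⦋2⦌) T4 := hV 0 (by decide)
  have hV2 : X.δ 2 W2 = N := hV 2 (by decide)
  have hV3 : X.δ 3 W2 = Gp f h hX a' p := hV 3 (by decide)
  set L := X.δ 1 W2 with hLdef
  have hL0 : X.δ 0 L = f.app (op ⦋1⦌)
      (fun _ => ULift.up (h ((a'.1.2 0).down))) := by
    have hdd := delta_comp_delta X (0 : Fin 3) (0 : Fin 3) (le_refl _) W2
    rw [show (0 : Fin 3).succ = 1 from rfl, show (0 : Fin 3).castSucc = 0 from rfl] at hdd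
    rw [hLdef, hdd, hV0, ← map_delta f 0 T4]
    apply congrArg
    apply fin2_funext
    · show T4 ((0 : Fin 3).succAbove 0) = ULift.up (h ((a'.1.2 0).down))
      rw [show (0 : Fin 3).succAbove 0 = 1 by decide]
      rfl
    · show T4 ((0 : Fin 3).succAbove 1) = ULift.up (h ((a'.1.2 0).down))
      rw [show (0 : Fin 3).succAbove 1 = 2 by decide]
      rfl
  have hL1 : X.δ 1 L = X.δ 1 (Gp f h hX a' q) := by
    have hdd := delta_comp_delta X (1 : Fin 3) (1 : Fin 3) (le_refl _) W2
    rw [show (1 : Fin 3).succ = 2 from rfl, show (1 : Fin 3).castSucc = 1 from rfl] at hdd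
    rw [hLdef, ← hdd, hV2, hN1]
  have hL2 : X.δ 2 L = X.δ 1 (Gp f h hX a' p) := by
    have hdd := delta_comp_delta X (1 : Fin 3) (2 : Fin 3) (by decide) W2
    rw [show (2 : Fin 3).succ = 3 from rfl, show (1 : Fin 3).castSucc = 1 from rfl] at hdd
    rw [hLdef, ← hdd, hV3]
  refine ⟨⟨(L, fun _ => a'.1.2 0), ?_, ?_⟩, ?_, ?_, ?_⟩
  · show X.map (SimplexCategory.const ⦋0⦌ ⦋2⦌ 0).op L = a
    rw [hLdef, vertex_delta W2 1 (by decide), ← vertex_delta W2 3 (by decide), hV3,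
      ← vertex_delta (Gp f h hX a' p) 2 (by decide), Gp_d2 f h hX a' p]
    exact p.2.1
  · show X.δ 0 L = _
    rw [hL0, disc_comp_app]
  · apply Subtype.ext
    apply Prod.ext
    · refine (homL_delta_fst _ _ _).trans ?_
      exact hL1
    · apply fin1_funext
      rfl
  · apply Subtype.ext
    apply Prod.ext
    · refine (homL_delta_fst _ _ _).trans ?_
      exact hL2
    · apply fin1_funext
      rfl
  · intro i hi
    exact absurd i.isLt (by omega)

lemma piMap_bij_zero (hX : IsNCategory nn X) (a' : (HomL X a (discMap h ≫ f)) _⦋0⦌) :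
    Function.Bijective (piMap (homLWhisker X a h f) a' 0) := by
  apply Function.bijective_iff_has_inverse.mpr
  refine ⟨Quot.lift (fun β => Quot.mk _ (⟨pb f h hX a' β.1, Set.mem_univ _⟩ :
      ↥(SKset (HomL X a (discMap h ≫ f)) a' 0)))
    (fun β γ hbg => (Quot.sound (r := fun (α β' : ↥(SKset (HomL X a (discMap h ≫ f)) a' 0)) =>
        Htpy _ α.1 β'.1) (a := ⟨pb f h hX a' γ.1, Set.mem_univ _⟩)
        (b := ⟨pb f h hX a' β.1, Set.mem_univ _⟩)
        (pb_welldef f h hX a' β.1 γ.1 hbg)).symm), ?_, ?_⟩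
  · intro q
    induction q using Quot.ind with
    | _ α => exact Quot.sound (htpy_pb_W f h hX a' α.1)
  · intro q
    induction q using Quot.ind with
    | _ β => exact Quot.sound (htpy_W_pb f h hX a' β.1)

end ZeroCase

/-- the map `Hom^L_X(a, f ∘ h) ⟶ Hom^L_X(a, f)` induced by a function
`h : [r] → [l]` is a weak equivalence. -/
theorem homLWhisker_weakEquiv (n : ℕ) (hn : 1 ≤ n) (X : SSet.{u}) (hX : IsNCategory n X)
    (a : X _⦋0⦌) (r l : ℕ) (f : Disc.{u} l ⟶ X) (h : Fin (r + 1) → Fin (l + 1)) :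
    IsWeakEquiv (homLWhisker X a h f) := by
  intro a' k
  cases k with
  | zero => exact piMap_bij_zero f h hX a'
  | succ K => exact piMap_bij_pos f h a a' K

end Paper
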